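/- Assume B is invertible and that W_J is Lorentzian. Let i ≠ j be elements of J with b_{ij} > 2, let λ > 1 be the unique eigenvalue of σ_j σ_i exceeding 1, and let v_λ be a nonzero eigenvector of σ_j σ_i for λ such that v_λ lies in the closure of T_J. Then the convex cone generated by {c_k : k ∈ {1,…,l}, k ≠ i, k ≠ j} ∪ {v_λ} is contained in the topological boundary of the closure of T_J. -/

import Mathlib

open Matrix Finset

/-- The Gram matrix `B` with `B i i = 1` and `B i k = -(b i k)/2` for `i ≠ k`. -/
noncomputable def gramB (l : ℕ) (b : Fin l → Fin l → ℝ) : Matrix (Fin l) (Fin l) ℝ :=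
  fun i k => if i = k then 1 else -(b i k) / 2

/-- The bilinear form `⟨v, w⟩_B = vᵀ B w`. -/
noncomputable def bform (l : ℕ) (b : Fin l → Fin l → ℝ) (v w : Fin l → ℝ) : ℝ :=
  dotProduct v ((gramB l b).mulVec w)

/-- The matrix `M j` of the reflection `σ j (w) = w - 2⟨w, e j⟩_B e j`: it agrees with
the identity except in row `j`, where `(M j) j j = -1` and `(M j) j k = b j k` for `k ≠ j`. -/
noncomputable def reflM (l : ℕ) (b : Fin l → Fin l → ℝ) (j : Fin l) :
    Matrix (Fin l) (Fin l) ℝ :=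
  fun r c => if r = j then (if c = j then -1 else b j c) else (if r = c then 1 else 0)

/-- The subgroup `W_J` generated by the reflections `σ j`, `j ∈ J` (since each `σ j` is an
involution, it coincides with the submonoid generated by them). -/
noncomputable def WJ (l : ℕ) (b : Fin l → Fin l → ℝ) (J : Set (Fin l)) :
    Submonoid (Matrix (Fin l) (Fin l) ℝ) :=
  Submonoid.closure (reflM l b '' J)

/-- The fundamental chamber `D = {x : ⟨x, e i⟩_B ≥ 0 for all i}`. -/
noncomputable def chamberD (l : ℕ) (b : Fin l → Fin l → ℝ) : Set (Fin l → ℝ) :=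
  {x | ∀ i : Fin l, 0 ≤ bform l b x (Pi.single i 1)}

/-- The cone `T_J = ⋃_{w ∈ W_J} w(D)`. -/
noncomputable def TJ (l : ℕ) (b : Fin l → Fin l → ℝ) (J : Set (Fin l)) : Set (Fin l → ℝ) :=
  {y | ∃ w ∈ WJ l b J, ∃ x ∈ chamberD l b, y = w.mulVec x}


/-- The dual basis vector `c k = B⁻¹ e k`, so that `⟨c k, e i⟩_B = δ_{k i}`. -/
noncomputable def cvec (l : ℕ) (b : Fin l → Fin l → ℝ) (k : Fin l) : Fin l → ℝ :=
  (gramB l b)⁻¹.mulVec (Pi.single k 1)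

set_option linter.unusedSectionVars false

section helpers
variable {l : ℕ} {b : Fin l → Fin l → ℝ}

lemma bform_add_left (y z v : Fin l → ℝ) :
    bform l b (y + z) v = bform l b y v + bform l b z v := by
  simp [bform, add_dotProduct]

lemma bform_smul_left (c : ℝ) (y v : Fin l → ℝ) :
    bform l b (c • y) v = c * bform l b y v := by
  simp [bform, smul_dotProduct]

lemma bform_add_right (y v w : Fin l → ℝ) :
    bform l b y (v + w) = bform l b y v + bform l b y w := by
  simp [bform, mulVec_add, dotProduct_add]

lemma bform_smul_right (c : ℝ) (y v : Fin l → ℝ) :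
    bform l b y (c • v) = c * bform l b y v := by
  simp [bform, mulVec_smul, dotProduct_smul, smul_eq_mul]

lemma bform_sub_left (y z v : Fin l → ℝ) :
    bform l b (y - z) v = bform l b y v - bform l b z v := by
  simp [bform, sub_dotProduct]

lemma bform_sub_right (y v w : Fin l → ℝ) :
    bform l b y (v - w) = bform l b y v - bform l b y w := by
  simp [bform, mulVec_sub, dotProduct_sub]

lemma bform_single_single (r m : Fin l) :
    bform l b (Pi.single r 1) (Pi.single m 1) = gramB l b r m := by
  simp [bform, mulVec_single, dotProduct, Pi.single_apply]

lemma gramB_same (m : Fin l) : gramB l b m m = 1 := by simp [gramB]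

lemma gramB_ne {r m : Fin l} (h : r ≠ m) : gramB l b r m = -(b r m) / 2 := by
  simp [gramB, h]

/-- Reflection as an update: `σ_m y = y - 2⟨y,e_m⟩ e_m`. Needs symmetry of `b`. -/
lemma reflM_mulVec (hsym : ∀ i j, i ≠ j → b i j = b j i) (m : Fin l) (y : Fin l → ℝ) :
    (reflM l b m) *ᵥ y = y - (2 * bform l b y (Pi.single m 1)) • (Pi.single m 1 : Fin l → ℝ) := by
  funext r
  simp only [Matrix.mulVec, dotProduct, reflM, Pi.sub_apply, Pi.smul_apply,
    Pi.single_apply, smul_eq_mul]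
  have hb : bform l b y (Pi.single m 1) = ∑ c, y c * gramB l b c m := by
    simp [bform, mulVec_single, dotProduct]
  by_cases hr : r = m
  · subst hr
    simp only [if_pos rfl, eq_self_iff_true, if_true, mul_one]
    rw [hb, Finset.mul_sum, eq_sub_iff_add_eq]
    have : (∑ x : Fin l, (if x = r then -1 else b r x) * y x) +
        ∑ i : Fin l, 2 * (y i * gramB l b i r)
        = ∑ x : Fin l, ((if x = r then -1 else b r x) * y x + 2 * (y x * gramB l b x r)) := by
      rw [Finset.sum_add_distrib]
    rw [this]
    rw [Finset.sum_eq_single r]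
    · simp [gramB_same]; ring
    · intro c _ hc
      rw [if_neg hc, gramB_ne hc, hsym r c (Ne.symm hc)]
      ring
    · simp
  · simp only [if_neg hr, if_neg (fun h : r = m => hr h), mul_zero, sub_zero]
    rw [Finset.sum_eq_single r]
    · simp
    · intro c _ hc; simp [if_neg (Ne.symm hc)]
    · simp

end helpers

section helpers2
variable {l : ℕ} {b : Fin l → Fin l → ℝ}

lemma bform_reflM (hsym : ∀ i j, i ≠ j → b i j = b j i) (m k : Fin l) (y : Fin l → ℝ) :
    bform l b ((reflM l b m) *ᵥ y) (Pi.single k 1) =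
      bform l b y (Pi.single k 1) - 2 * bform l b y (Pi.single m 1) * gramB l b m k := by
  rw [reflM_mulVec hsym, bform_sub_left, bform_smul_left, bform_single_single]

lemma bform_reflM_same (hsym : ∀ i j, i ≠ j → b i j = b j i) (m : Fin l) (y : Fin l → ℝ) :
    bform l b ((reflM l b m) *ᵥ y) (Pi.single m 1) = - bform l b y (Pi.single m 1) := by
  rw [bform_reflM hsym, gramB_same]; ring

lemma bform_reflM_ne (hsym : ∀ i j, i ≠ j → b i j = b j i) {m k : Fin l} (hmk : m ≠ k)
    (y : Fin l → ℝ) :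
    bform l b ((reflM l b m) *ᵥ y) (Pi.single k 1) =
      bform l b y (Pi.single k 1) + b m k * bform l b y (Pi.single m 1) := by
  rw [bform_reflM hsym, gramB_ne hmk]; ring

lemma gramB_symm (hsym : ∀ i j, i ≠ j → b i j = b j i) (r m : Fin l) :
    gramB l b r m = gramB l b m r := by
  by_cases h : r = m
  · subst h; rfl
  · rw [gramB_ne h, gramB_ne (Ne.symm h), hsym r m h]

lemma matrix_entry_eq (A : Matrix (Fin l) (Fin l) ℝ) (r c : Fin l) :
    A r c = Pi.single r 1 ⬝ᵥ (A *ᵥ Pi.single c 1) := by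
  simp [mulVec_single, dotProduct, Pi.single_apply]

lemma reflM_mulVec_mulVec (hsym : ∀ i j, i ≠ j → b i j = b j i) (m : Fin l) (y : Fin l → ℝ) :
    (reflM l b m) *ᵥ ((reflM l b m) *ᵥ y) = y := by
  rw [reflM_mulVec hsym m ((reflM l b m) *ᵥ y), bform_reflM_same hsym, reflM_mulVec hsym]
  module

lemma reflM_sq (hsym : ∀ i j, i ≠ j → b i j = b j i) (m : Fin l) :
    reflM l b m * reflM l b m = 1 := by
  ext r c
  rw [matrix_entry_eq (reflM l b m * reflM l b m) r c, ← mulVec_mulVec, reflM_mulVec_mulVec hsym]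
  simp [dotProduct, Pi.single_apply, Matrix.one_apply, eq_comm]

lemma reflM_transpose_gramB (hsym : ∀ i j, i ≠ j → b i j = b j i) (m : Fin l) :
    (reflM l b m)ᵀ * gramB l b = gramB l b * reflM l b m := by
  ext r c
  rw [matrix_entry_eq ((reflM l b m)ᵀ * gramB l b) r c, matrix_entry_eq (gramB l b * reflM l b m) r c]
  rw [← mulVec_mulVec, ← mulVec_mulVec]
  have h1 : (reflM l b m)ᵀ *ᵥ (gramB l b *ᵥ Pi.single c 1)
      = (gramB l b *ᵥ Pi.single c 1) ᵥ* (reflM l b m) := mulVec_transpose _ _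
  rw [h1]
  have h2 : Pi.single r 1 ⬝ᵥ ((gramB l b *ᵥ Pi.single c 1) ᵥ* reflM l b m)
      = (reflM l b m *ᵥ Pi.single r 1) ⬝ᵥ (gramB l b *ᵥ Pi.single c 1) := by
    rw [dotProduct_comm, ← dotProduct_mulVec, dotProduct_comm]
  rw [h2]
  show bform l b (reflM l b m *ᵥ Pi.single r 1) (Pi.single c 1)
      = bform l b (Pi.single r 1) (reflM l b m *ᵥ Pi.single c 1)
  rw [bform_reflM hsym, reflM_mulVec hsym, bform_sub_right, bform_smul_right,
    bform_single_single, bform_single_single, bform_single_single,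
    gramB_symm hsym c m]
  ring
end helpers2

/-- The positivity invariant: `y` is componentwise nonnegative, and for every `k ≠ h`
we have `⟨y,e_k⟩ ≤ 0` and `⟨y,e_h⟩ + ⟨y,e_k⟩ ≤ 0`. -/
def PosP (l : ℕ) (b : Fin l → Fin l → ℝ) (y : Fin l → ℝ) (h : Fin l) : Prop :=
  (∀ r, 0 ≤ y r) ∧ ∀ k, k ≠ h → bform l b y (Pi.single k 1) ≤ 0 ∧
    bform l b y (Pi.single h 1) + bform l b y (Pi.single k 1) ≤ 0

section helpers3
variable {l : ℕ} {b : Fin l → Fin l → ℝ}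

lemma PosP.smul {y : Fin l → ℝ} {h : Fin l} {c : ℝ} (hc : 0 < c)
    (hy : PosP l b y h) : PosP l b (c • y) h := by
  refine ⟨fun r => by simpa using mul_nonneg hc.le (hy.1 r), fun k hk => ?_⟩
  obtain ⟨h1, h2⟩ := hy.2 k hk
  rw [bform_smul_left, bform_smul_left]
  constructor
  · exact mul_nonpos_of_nonneg_of_nonpos hc.le h1
  · nlinarith

lemma PosP.step (hsym : ∀ i j, i ≠ j → b i j = b j i) (hge : ∀ i j, i ≠ j → 2 ≤ b i j)
    {y : Fin l → ℝ} {h m : Fin l} (hmh : m ≠ h) (hy : PosP l b y h) :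
    PosP l b ((reflM l b m) *ᵥ y) m := by
  have htm : bform l b y (Pi.single m 1) ≤ 0 := (hy.2 m hmh).1
  have hhm : bform l b y (Pi.single h 1) + bform l b y (Pi.single m 1) ≤ 0 := (hy.2 m hmh).2
  constructor
  · intro r
    rw [reflM_mulVec hsym]
    by_cases hr : r = m
    · subst hr
      simp only [Pi.sub_apply, Pi.smul_apply, Pi.single_apply, if_pos rfl, smul_eq_mul, mul_one,
        eq_self_iff_true, if_true]
      nlinarith [hy.1 r]
    · simp only [Pi.sub_apply, Pi.smul_apply, Pi.single_apply, if_neg hr, smul_eq_mul, mul_zero,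
        sub_zero]
      exact hy.1 r
  · intro k hkm
    have hsame := bform_reflM_same hsym m y
    have hne := bform_reflM_ne hsym (Ne.symm hkm) y
    rw [hne, hsame]
    by_cases hkh : k = h
    · subst hkh
      have hb := hge m k (Ne.symm hkm)
      constructor
      · nlinarith
      · nlinarith
    · have h1 := (hy.2 k hkh).1
      have hb := hge m k (Ne.symm hkm)
      constructor
      · nlinarith
      · nlinarith

end helpers3

/-- The expanding eigenvector `u = (λ+1) e_i + (b i j · λ) e_j` of `σ_j σ_i`. -/
noncomputable def uvec (l : ℕ) (b : Fin l → Fin l → ℝ) (i j : Fin l) (lam : ℝ) :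
    Fin l → ℝ :=
  (lam + 1) • (Pi.single i 1 : Fin l → ℝ) + (b i j * lam) • (Pi.single j 1 : Fin l → ℝ)

/-- The companion eigenvector `u'' = σ_j u = (λ+1) e_i + (b i j) e_j`. -/
noncomputable def uvec2 (l : ℕ) (b : Fin l → Fin l → ℝ) (i j : Fin l) (lam : ℝ) :
    Fin l → ℝ :=
  (lam + 1) • (Pi.single i 1 : Fin l → ℝ) + (b i j) • (Pi.single j 1 : Fin l → ℝ)

section helpers4
variable {l : ℕ} {b : Fin l → Fin l → ℝ} {i j : Fin l} {lam : ℝ}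
  (hsym : ∀ i j, i ≠ j → b i j = b j i) (hij : i ≠ j)
  (hK : b i j ^ 2 * lam = (lam + 1) ^ 2) (hlam : 1 < lam)

include hsym hij in
lemma bform_uvec_left (v : Fin l → ℝ) :
    bform l b (uvec l b i j lam) v
      = (lam + 1) * bform l b (Pi.single i 1) v + (b i j * lam) * bform l b (Pi.single j 1) v := by
  rw [uvec, bform_add_left, bform_smul_left, bform_smul_left]

include hsym hij in
lemma bform_uvec2_left (v : Fin l → ℝ) :
    bform l b (uvec2 l b i j lam) v
      = (lam + 1) * bform l b (Pi.single i 1) v + (b i j) * bform l b (Pi.single j 1) v := by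
  rw [uvec2, bform_add_left, bform_smul_left, bform_smul_left]

include hsym hij hK in
lemma tu_i : bform l b (uvec l b i j lam) (Pi.single i 1) = (lam + 1) * (1 - lam) / 2 := by
  rw [bform_uvec_left hsym hij, bform_single_single, bform_single_single, gramB_same,
    gramB_ne (Ne.symm hij), hsym j i (Ne.symm hij)]
  linear_combination (-(1:ℝ)/2) * hK

include hsym hij in
lemma tu_j : bform l b (uvec l b i j lam) (Pi.single j 1) = b i j * (lam - 1) / 2 := by
  rw [bform_uvec_left hsym hij, bform_single_single, bform_single_single, gramB_same,
    gramB_ne hij]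
  ring

include hsym hij in
lemma tu_k {k : Fin l} (hki : k ≠ i) (hkj : k ≠ j) :
    bform l b (uvec l b i j lam) (Pi.single k 1)
      = -((lam + 1) * b i k) / 2 - (b i j * lam) * b j k / 2 := by
  rw [bform_uvec_left hsym hij, bform_single_single, bform_single_single,
    gramB_ne (Ne.symm hki), gramB_ne (Ne.symm hkj)]
  ring

include hsym hij hK hlam in
lemma tu2_i : bform l b (uvec2 l b i j lam) (Pi.single i 1)
    = (lam + 1) * (lam - 1) / (2 * lam) := by
  have h0 : lam ≠ 0 := by linarith
  rw [bform_uvec2_left hsym hij, bform_single_single, bform_single_single, gramB_same,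
    gramB_ne (Ne.symm hij), hsym j i (Ne.symm hij)]
  field_simp
  linear_combination (-(1:ℝ)) * hK

include hsym hij in
lemma tu2_j : bform l b (uvec2 l b i j lam) (Pi.single j 1) = b i j * (1 - lam) / 2 := by
  rw [bform_uvec2_left hsym hij, bform_single_single, bform_single_single, gramB_same,
    gramB_ne hij]
  ring

include hsym hij in
lemma tu2_k {k : Fin l} (hki : k ≠ i) (hkj : k ≠ j) :
    bform l b (uvec2 l b i j lam) (Pi.single k 1)
      = -((lam + 1) * b i k) / 2 - (b i j) * b j k / 2 := by
  rw [bform_uvec2_left hsym hij, bform_single_single, bform_single_single,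
    gramB_ne (Ne.symm hki), gramB_ne (Ne.symm hkj)]
  ring

include hsym hij hK in
lemma refl_i_u : reflM l b i *ᵥ uvec l b i j lam = lam • uvec2 l b i j lam := by
  rw [reflM_mulVec hsym, tu_i hsym hij hK, uvec, uvec2]
  module

include hsym hij hK in
lemma refl_j_u : reflM l b j *ᵥ uvec l b i j lam = uvec2 l b i j lam := by
  rw [reflM_mulVec hsym, tu_j hsym hij, uvec, uvec2]
  module

include hsym hij hK hlam in
lemma refl_i_u2 : reflM l b i *ᵥ uvec2 l b i j lam = lam⁻¹ • uvec l b i j lam := by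
  have h0 : lam ≠ 0 := by linarith
  rw [reflM_mulVec hsym, tu2_i hsym hij hK hlam, uvec, uvec2]
  rw [smul_add, smul_smul, smul_smul]
  have e1 : lam⁻¹ * (lam + 1) = (lam + 1) - 2 * ((lam + 1) * (lam - 1) / (2 * lam)) := by
    field_simp; ring
  have e2 : lam⁻¹ * (b i j * lam) = b i j := by field_simp
  rw [e1, e2]
  module

include hsym hij hK in
lemma refl_j_u2 : reflM l b j *ᵥ uvec2 l b i j lam = uvec l b i j lam := by
  rw [reflM_mulVec hsym, tu2_j hsym hij, uvec, uvec2]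
  module

include hlam in
lemma uvec_nonneg (hb0 : 0 ≤ b i j) : ∀ r, 0 ≤ uvec l b i j lam r := by
  intro r
  simp only [uvec, Pi.add_apply, Pi.smul_apply, Pi.single_apply, smul_eq_mul]
  have : (0:ℝ) ≤ lam + 1 := by linarith
  positivity

include hlam in
lemma uvec2_nonneg (hb0 : 0 ≤ b i j) : ∀ r, 0 ≤ uvec2 l b i j lam r := by
  intro r
  simp only [uvec2, Pi.add_apply, Pi.smul_apply, Pi.single_apply, smul_eq_mul]
  have : (0:ℝ) ≤ lam + 1 := by linarith
  positivity

end helpers4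

section helpers5
variable {l : ℕ} {b : Fin l → Fin l → ℝ} {i j : Fin l} {lam : ℝ}
  (hsym : ∀ i j, i ≠ j → b i j = b j i) (hge : ∀ i j, i ≠ j → 2 ≤ b i j) (hij : i ≠ j)
  (hK : b i j ^ 2 * lam = (lam + 1) ^ 2) (hlam : 1 < lam)

include hsym hge hij hK hlam in
lemma base_u : PosP l b (uvec l b i j lam) j := by
  have hb2 := hge i j hij
  have hble : b i j ≤ lam + 1 := by
    nlinarith [sq_nonneg (b i j - (lam+1)), sq_nonneg (b i j + lam + 1)]
  refine ⟨uvec_nonneg hlam (by linarith), fun k hk => ?_⟩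
  by_cases hki : k = i
  · rw [hki, tu_i hsym hij hK, tu_j hsym hij]
    constructor
    · nlinarith
    · nlinarith
  · rw [tu_k hsym hij hki hk, tu_j hsym hij]
    have h1 := hge i k (Ne.symm hki)
    have h2 := hge j k (Ne.symm hk)
    have hp1 : (0:ℝ) ≤ (lam + 1) * b i k := by nlinarith
    have hp2 : (0:ℝ) ≤ (b i j * lam) * b j k := by nlinarith
    constructor
    · nlinarith
    · nlinarith [mul_nonneg (mul_nonneg (show (0:ℝ) ≤ b i j by linarith)
        (show (0:ℝ) ≤ lam by linarith)) (show (0:ℝ) ≤ b j k - 2 by linarith)]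

include hsym hge hij hK hlam in
lemma base_u2 : PosP l b (uvec2 l b i j lam) i := by
  have hb2 := hge i j hij
  have hbl : lam + 1 ≤ b i j * lam := by
    nlinarith [sq_nonneg (b i j * lam - (lam+1)), sq_nonneg (b i j * lam + lam + 1)]
  have hlam0 : (0:ℝ) < lam := by linarith
  refine ⟨uvec2_nonneg hlam (by linarith), fun k hk => ?_⟩
  by_cases hkj : k = j
  · rw [hkj, tu2_i hsym hij hK hlam, tu2_j hsym hij]
    have heq : b i j * (1 - lam) / 2 = - (b i j * lam * (lam - 1)) / (2 * lam) := by
      field_simp; ring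
    constructor
    · nlinarith
    · rw [heq]
      have heq2 : (lam + 1) * (lam - 1) / (2 * lam) + -(b i j * lam * (lam - 1)) / (2 * lam)
          = (lam - 1) / (2 * lam) * ((lam + 1) - b i j * lam) := by
        field_simp; ring
      rw [heq2]
      apply mul_nonpos_of_nonneg_of_nonpos
      · apply div_nonneg <;> linarith
      · linarith
  · rw [tu2_k hsym hij hk hkj, tu2_i hsym hij hK hlam]
    have h1 := hge i k (Ne.symm hk)
    have h2 := hge j k (Ne.symm hkj)
    have hp1 : (0:ℝ) ≤ (lam + 1) * b i k := by nlinarith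
    have hp2 : (2:ℝ) ≤ b i j * b j k / 2 := by nlinarith
    have h3 : (lam + 1) * (lam - 1) / (2 * lam) ≤ (lam + 1) / 2 := by
      rw [div_le_div_iff₀ (by linarith) (by norm_num)]
      nlinarith
    constructor
    · nlinarith
    · nlinarith

include hsym hge hij hK hlam in
lemma main_orbit : ∀ L : List (Fin l), L.Chain' (· ≠ ·) →
    (∃ r : ℝ, 0 < r ∧
      ((L.map (reflM l b)).prod *ᵥ uvec l b i j lam = r • uvec l b i j lam ∨
       (L.map (reflM l b)).prod *ᵥ uvec l b i j lam = r • uvec2 l b i j lam)) ∨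
    (∃ hd tl, L = hd :: tl ∧
      PosP l b ((L.map (reflM l b)).prod *ᵥ uvec l b i j lam) hd) := by
  intro L hL
  induction L with
  | nil =>
    refine Or.inl ⟨1, one_pos, Or.inl ?_⟩
    simp [Matrix.one_mulVec]
  | cons m L ih =>
    have hL' : L.Chain' (· ≠ ·) := List.IsChain.tail hL
    have hprod : ((m :: L).map (reflM l b)).prod *ᵥ uvec l b i j lam
        = reflM l b m *ᵥ ((L.map (reflM l b)).prod *ᵥ uvec l b i j lam) := by
      rw [List.map_cons, List.prod_cons, mulVec_mulVec]
    rcases ih hL' with ⟨r, hr, hy | hy⟩ | ⟨hd, tl, rfl, hP⟩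
    · -- y = r • u
      by_cases hmi : m = i
      · subst hmi
        refine Or.inl ⟨r * lam, by positivity, Or.inr ?_⟩
        rw [hprod, hy, mulVec_smul, refl_i_u hsym hij hK, smul_smul]
      · by_cases hmj : m = j
        · subst hmj
          refine Or.inl ⟨r, hr, Or.inr ?_⟩
          rw [hprod, hy, mulVec_smul, refl_j_u hsym hij hK]
        · refine Or.inr ⟨m, L, rfl, ?_⟩
          rw [hprod, hy]
          exact PosP.step hsym hge hmj ((base_u hsym hge hij hK hlam).smul hr)
    · -- y = r • u2
      by_cases hmi : m = i
      · subst hmi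
        refine Or.inl ⟨r * lam⁻¹, by positivity, Or.inl ?_⟩
        rw [hprod, hy, mulVec_smul, refl_i_u2 hsym hij hK hlam, smul_smul]
      · by_cases hmj : m = j
        · subst hmj
          refine Or.inl ⟨r, hr, Or.inl ?_⟩
          rw [hprod, hy, mulVec_smul, refl_j_u2 hsym hij hK]
        · refine Or.inr ⟨m, L, rfl, ?_⟩
          rw [hprod, hy]
          exact PosP.step hsym hge hmi ((base_u2 hsym hge hij hK hlam).smul hr)
    · -- PosP y hd
      have hmhd : m ≠ hd := (List.isChain_cons_cons.mp hL).1
      refine Or.inr ⟨m, hd :: tl, rfl, ?_⟩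
      rw [hprod]
      exact PosP.step hsym hge hmhd hP

include hsym hge hij hK hlam in
lemma alt_orbit_nonneg (L : List (Fin l)) (hL : L.Chain' (· ≠ ·)) :
    ∀ r, 0 ≤ ((L.map (reflM l b)).prod *ᵥ uvec l b i j lam) r := by
  have hb2 := hge i j hij
  rcases main_orbit hsym hge hij hK hlam L hL with ⟨r, hr, hy | hy⟩ | ⟨hd, tl, _, hP⟩
  · intro s; rw [hy]
    exact smul_nonneg hr.le (uvec_nonneg hlam (by linarith) s)
  · intro s; rw [hy]
    exact smul_nonneg hr.le (uvec2_nonneg hlam (by linarith) s)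
  · exact hP.1

include hsym in
lemma exists_alt : ∀ (n : ℕ) (L : List (Fin l)), L.length ≤ n →
    ∃ L' : List (Fin l), L'.Chain' (· ≠ ·) ∧
      ((L'.map (reflM l b)).prod = (L.map (reflM l b)).prod) := by
  intro n
  induction n with
  | zero =>
    intro L hL
    rw [Nat.le_zero, List.length_eq_zero_iff] at hL
    exact ⟨[], List.isChain_nil, by simp [hL]⟩
  | succ n ih =>
    intro L hL
    match L with
    | [] => exact ⟨[], List.isChain_nil, by simp⟩
    | a :: T =>
      obtain ⟨R, hR, hprod⟩ := ih T (by simpa using Nat.le_of_succ_le_succ hL)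
      have hProdCons : ((a :: T).map (reflM l b)).prod
          = reflM l b a * (R.map (reflM l b)).prod := by
        rw [List.map_cons, List.prod_cons, ← hprod]
      match R, hR with
      | [], _ => exact ⟨[a], List.isChain_singleton a, by rw [hProdCons]; simp⟩
      | c :: R', hR =>
        by_cases hac : a = c
        · subst hac
          refine ⟨R', List.IsChain.tail hR, ?_⟩
          rw [hProdCons, List.map_cons, List.prod_cons, ← mul_assoc, reflM_sq hsym, one_mul]
        · exact ⟨a :: c :: R', List.isChain_cons_cons.mpr ⟨hac, hR⟩, by
            rw [hProdCons, List.map_cons, List.prod_cons]⟩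

lemma WJ_mem_prod {J : Set (Fin l)} {w : Matrix (Fin l) (Fin l) ℝ}
    (hw : w ∈ Submonoid.closure (reflM l b '' J)) :
    ∃ L : List (Fin l), w = (L.map (reflM l b)).prod := by
  induction hw using Submonoid.closure_induction with
  | mem x hx =>
    obtain ⟨k, _, rfl⟩ := hx
    exact ⟨[k], by simp⟩
  | one => exact ⟨[], by simp⟩
  | mul x y hx hy ihx ihy =>
    obtain ⟨L1, rfl⟩ := ihx
    obtain ⟨L2, rfl⟩ := ihy
    exact ⟨L1 ++ L2, by rw [List.map_append, List.prod_append]⟩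

include hsym hge hij hK hlam in
lemma WJ_orbit_u {J : Set (Fin l)} {w : Matrix (Fin l) (Fin l) ℝ}
    (hw : w ∈ Submonoid.closure (reflM l b '' J)) :
    ∀ r, 0 ≤ (w *ᵥ uvec l b i j lam) r := by
  obtain ⟨L, rfl⟩ := WJ_mem_prod hw
  obtain ⟨L', hL', hprod⟩ := exists_alt hsym L.length L le_rfl
  rw [← hprod]
  exact alt_orbit_nonneg hsym hge hij hK hlam L' hL'

include hsym hge hij hK hlam in
lemma WJ_orbit_u2 {J : Set (Fin l)} {w : Matrix (Fin l) (Fin l) ℝ} (hjJ : j ∈ J)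
    (hw : w ∈ Submonoid.closure (reflM l b '' J)) :
    ∀ r, 0 ≤ (w *ᵥ uvec2 l b i j lam) r := by
  have h2 : w * reflM l b j ∈ Submonoid.closure (reflM l b '' J) :=
    mul_mem hw (Submonoid.subset_closure ⟨j, hjJ, rfl⟩)
  have := WJ_orbit_u hsym hge hij hK hlam h2
  rw [← mulVec_mulVec, refl_j_u hsym hij hK] at this
  exact this
end helpers5

section helpers6
variable {l : ℕ} {b : Fin l → Fin l → ℝ}
  (hsym : ∀ i j, i ≠ j → b i j = b j i)

lemma bform_zero_left (v : Fin l → ℝ) : bform l b 0 v = 0 := by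
  simp [bform]

lemma bform_sum_left {ι : Type*} (s : Finset ι) (f : ι → Fin l → ℝ) (v : Fin l → ℝ) :
    bform l b (∑ k ∈ s, f k) v = ∑ k ∈ s, bform l b (f k) v := by
  classical
  induction s using Finset.induction_on with
  | empty => simp [bform]
  | insert _ _ h ih => rw [Finset.sum_insert h, Finset.sum_insert h, bform_add_left, ih]

lemma bform_continuous (v : Fin l → ℝ) : Continuous fun y => bform l b y v := by
  unfold bform dotProduct
  exact continuous_finset_sum _ fun r _ => (continuous_apply r).mul continuous_const

include hsym in
lemma WJ_transpose {J : Set (Fin l)} {w : Matrix (Fin l) (Fin l) ℝ}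
    (hw : w ∈ Submonoid.closure (reflM l b '' J)) :
    ∃ w' ∈ Submonoid.closure (reflM l b '' J), wᵀ * gramB l b = gramB l b * w' := by
  induction hw using Submonoid.closure_induction with
  | mem x hx =>
    obtain ⟨k, hk, rfl⟩ := hx
    exact ⟨reflM l b k, Submonoid.subset_closure ⟨k, hk, rfl⟩, reflM_transpose_gramB hsym k⟩
  | one => exact ⟨1, one_mem _, by simp⟩
  | mul x y hx hy ihx ihy =>
    obtain ⟨x', hx', hxe⟩ := ihx
    obtain ⟨y', hy', hye⟩ := ihy
    refine ⟨y' * x', mul_mem hy' hx', ?_⟩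
    rw [Matrix.transpose_mul, mul_assoc, hxe, ← mul_assoc, hye, mul_assoc]

lemma bform_sum_right {ι : Type*} (s : Finset ι) (f : ι → Fin l → ℝ) (y : Fin l → ℝ) :
    bform l b y (∑ k ∈ s, f k) = ∑ k ∈ s, bform l b y (f k) := by
  classical
  induction s using Finset.induction_on with
  | empty => simp [bform, Matrix.mulVec_zero]
  | insert _ _ h ih => rw [Finset.sum_insert h, Finset.sum_insert h, bform_add_right, ih]

lemma bform_nonneg_of_chamber {x v : Fin l → ℝ} (hx : x ∈ chamberD l b)
    (hv : ∀ r, 0 ≤ v r) : 0 ≤ bform l b x v := by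
  have hrep : v = ∑ k : Fin l, v k • (Pi.single k 1 : Fin l → ℝ) := by
    conv_lhs => rw [← Finset.univ_sum_single v]
    exact Finset.sum_congr rfl fun k _ => by rw [← Pi.single_smul, smul_eq_mul, mul_one]
  rw [hrep, bform_sum_right]
  refine Finset.sum_nonneg fun k _ => ?_
  rw [bform_smul_right]
  exact mul_nonneg (hv k) (hx k)

include hsym in
lemma TJ_bform_nonneg {J : Set (Fin l)} {v : Fin l → ℝ}
    (horb : ∀ w ∈ Submonoid.closure (reflM l b '' J), ∀ r, 0 ≤ (w *ᵥ v) r) :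
    ∀ y ∈ TJ l b J, 0 ≤ bform l b y v := by
  rintro y ⟨w, hw, x, hx, rfl⟩
  obtain ⟨w', hw', hwe⟩ := WJ_transpose hsym hw
  have e1 : (gramB l b *ᵥ v) ᵥ* w = gramB l b *ᵥ (w' *ᵥ v) := by
    rw [← mulVec_transpose, mulVec_mulVec, hwe, ← mulVec_mulVec]
  have key : bform l b (w *ᵥ x) v = bform l b x (w' *ᵥ v) := by
    unfold bform
    rw [dotProduct_comm, dotProduct_mulVec, e1, dotProduct_comm]
  rw [show (w.mulVec x) = w *ᵥ x from rfl, key]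
  exact bform_nonneg_of_chamber hx (horb w' hw')

include hsym in
lemma bform_cvec (hBinv : IsUnit (gramB l b).det) (k : Fin l) (v : Fin l → ℝ) :
    bform l b (cvec l b k) v = v k := by
  unfold bform cvec
  rw [dotProduct_comm, dotProduct_mulVec]
  have h1 : (gramB l b *ᵥ v) ᵥ* (gramB l b)⁻¹ = ((gramB l b)⁻¹ᵀ * gramB l b) *ᵥ v := by
    rw [← mulVec_transpose, mulVec_mulVec]
  rw [h1]
  have h2 : (gramB l b)⁻¹ᵀ = (gramB l b)⁻¹ := by
    rw [Matrix.transpose_nonsing_inv]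
    congr 1
    ext r c
    exact gramB_symm hsym c r
  rw [h2, Matrix.nonsing_inv_mul _ hBinv, Matrix.one_mulVec, dotProduct_single, mul_one]

include hsym in
lemma reflM_fix_cvec (hBinv : IsUnit (gramB l b).det) {m k : Fin l} (hmk : m ≠ k) :
    reflM l b m *ᵥ cvec l b k = cvec l b k := by
  rw [reflM_mulVec hsym, bform_cvec hsym hBinv, Pi.single_eq_of_ne (Ne.symm hmk)]
  simp

end helpers6



set_option maxHeartbeats 1000000 in
/-- **Limit faces of the closed cone `T̄_J` (Lorentzian case).**
Assume `B` is invertible and `W_J` is Lorentzian, i.e. the submatrix `B_J` is invertible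
with exactly one negative eigenvalue (signature `(|J| - 1, 1)`). Let `i ≠ j` in `J` with
`b i j > 2`, let `λ > 1` be the unique eigenvalue of `σ j σ i` exceeding `1`, and let
`v_λ ≠ 0` be an eigenvector for `λ` lying in the closure of `T_J`. Then the convex cone
generated by `{c k : k ≠ i, j} ∪ {v_λ}` is contained in the topological boundary of the
closure of `T_J`. -/
theorem cone_subset_frontier_TJ (l : ℕ) (hl : 2 ≤ l) (b : Fin l → Fin l → ℝ)
    (hsym : ∀ i j, i ≠ j → b i j = b j i) (hge : ∀ i j, i ≠ j → 2 ≤ b i j)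
    (hBinv : IsUnit (gramB l b).det)
    (J : Finset (Fin l))
    (hHerm : ((gramB l b).submatrix
        (Subtype.val : {k : Fin l // k ∈ J} → Fin l) Subtype.val).IsHermitian)
    (hJdet : IsUnit ((gramB l b).submatrix
        (Subtype.val : {k : Fin l // k ∈ J} → Fin l) Subtype.val).det)
    (hJneg : (Finset.univ.filter fun k => hHerm.eigenvalues k < 0).card = 1)
    (hJpos : (Finset.univ.filter fun k => 0 < hHerm.eigenvalues k).card = J.card - 1)
    (i j : Fin l) (hiJ : i ∈ J) (hjJ : j ∈ J) (hij : i ≠ j) (hgt : 2 < b i j)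
    (lam : ℝ) (hlam : 1 < lam)
    (huniq : ∀ μ : ℝ,
      Module.End.HasEigenvalue (Matrix.toLin' (reflM l b j * reflM l b i)) μ →
        1 < μ → μ = lam)
    (vlam : Fin l → ℝ) (hv0 : vlam ≠ 0)
    (heig : (reflM l b j * reflM l b i).mulVec vlam = lam • vlam)
    (hvT : vlam ∈ closure (TJ l b ↑J)) :
    ∀ (a : Fin l → ℝ) (c0 : ℝ), (∀ k, 0 ≤ a k) → 0 ≤ c0 →
      c0 • vlam + ∑ k ∈ (Finset.univ.erase i).erase j, a k • cvec l b k
        ∈ frontier (closure (TJ l b ↑J)) := by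
  intro a c0 ha hc0
  have hb2 : 2 ≤ b i j := hge i j hij
  have hlam0 : (0:ℝ) < lam := by linarith
  have hlamne : lam ≠ 0 := ne_of_gt hlam0
  have hlamp1 : lam + 1 ≠ 0 := by linarith
  have hlm1pos : (0:ℝ) < lam - 1 := by linarith
  -- eigenvector structure
  have heig' : reflM l b j *ᵥ (reflM l b i *ᵥ vlam) = lam • vlam := by
    rw [mulVec_mulVec]; exact heig
  have hzero : ∀ r, r ≠ i → r ≠ j → vlam r = 0 := by
    intro r hri hrj
    have h := congrFun heig' r
    rw [reflM_mulVec hsym j, reflM_mulVec hsym i] at h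
    simp only [Pi.sub_apply, Pi.smul_apply, Pi.single_apply, smul_eq_mul,
      if_neg hri, if_neg hrj, mul_zero, sub_zero] at h
    have h2 : (lam - 1) * vlam r = 0 := by linarith
    rcases mul_eq_zero.mp h2 with h3 | h3
    · exact absurd h3 (by positivity)
    · exact h3
  have hrep : vlam = vlam i • (Pi.single i 1 : Fin l → ℝ)
      + vlam j • (Pi.single j 1 : Fin l → ℝ) := by
    funext r
    simp only [Pi.add_apply, Pi.smul_apply, Pi.single_apply, smul_eq_mul, mul_one]
    by_cases hri : r = i
    · subst hri
      rw [if_pos rfl, if_neg (fun h : r = j => hij h)]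
      ring
    · rw [if_neg hri]
      by_cases hrj : r = j
      · subst hrj; rw [if_pos rfl]; ring
      · rw [if_neg hrj, hzero r hri hrj]; ring
  have hbvi : bform l b vlam (Pi.single i 1) = vlam i - vlam j * (b i j) / 2 := by
    conv_lhs => rw [hrep]
    rw [bform_add_left, bform_smul_left, bform_smul_left, bform_single_single,
      bform_single_single, gramB_same, gramB_ne (Ne.symm hij), hsym j i (Ne.symm hij)]
    ring
  have hbvj : bform l b vlam (Pi.single j 1) = vlam j - vlam i * (b i j) / 2 := by
    conv_lhs => rw [hrep]
    rw [bform_add_left, bform_smul_left, bform_smul_left, bform_single_single,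
      bform_single_single, gramB_same, gramB_ne hij]
    ring
  have hXi : (reflM l b i *ᵥ vlam) i = vlam i - 2 * bform l b vlam (Pi.single i 1) := by
    rw [reflM_mulVec hsym]
    simp [Pi.single_apply]
  have hXj : (reflM l b i *ᵥ vlam) j = vlam j := by
    rw [reflM_mulVec hsym]
    simp [Pi.single_apply, if_neg hij, Ne.symm hij]
  have hE1 : b i j * vlam j = (lam + 1) * vlam i := by
    have h := congrFun heig' i
    rw [reflM_mulVec hsym j] at h
    simp only [Pi.sub_apply, Pi.smul_apply, Pi.single_apply, if_neg hij, smul_eq_mul,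
      mul_zero, sub_zero] at h
    rw [hXi, hbvi] at h
    linarith
  have hE2 : b i j * lam * vlam i = (lam + 1) * vlam j := by
    have h := congrFun heig' j
    rw [reflM_mulVec hsym j] at h
    simp only [Pi.sub_apply, Pi.smul_apply, Pi.single_apply, if_pos rfl, smul_eq_mul,
      eq_self_iff_true, if_true, mul_one] at h
    rw [hXj, bform_reflM_ne hsym hij, hbvi, hbvj] at h
    linear_combination h - b i j * hE1
  have hvi0 : vlam i ≠ 0 := by
    intro h
    have hvj : vlam j = 0 := by
      have h2 : b i j * vlam j = 0 := by rw [hE1, h, mul_zero]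
      rcases mul_eq_zero.mp h2 with h3 | h3
      · exact absurd h3 (by linarith)
      · exact h3
    apply hv0
    rw [hrep, h, hvj]
    simp
  have hK : b i j ^ 2 * lam = (lam + 1) ^ 2 := by
    have h : (b i j ^ 2 * lam) * vlam i = ((lam + 1) ^ 2) * vlam i := by
      linear_combination (b i j) * hE2 + (lam + 1) * hE1
    exact mul_right_cancel₀ hvi0 h
  set τ := vlam i / (lam + 1) with hτdef
  have hvlam_u : vlam = τ • uvec l b i j lam := by
    rw [hrep, uvec, smul_add, smul_smul, smul_smul]
    congr 2
    · rw [hτdef]; field_simp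
    · rw [hτdef]; field_simp; linear_combination -hE2
  -- nonnegativity of the two functionals on the closure of T_J
  have hjJ' : j ∈ (↑J : Set (Fin l)) := by simpa using hjJ
  have horb_u : ∀ w ∈ Submonoid.closure (reflM l b '' (↑J : Set (Fin l))),
      ∀ r, 0 ≤ (w *ᵥ uvec l b i j lam) r := fun w hw => WJ_orbit_u hsym hge hij hK hlam hw
  have horb_u2 : ∀ w ∈ Submonoid.closure (reflM l b '' (↑J : Set (Fin l))),
      ∀ r, 0 ≤ (w *ᵥ uvec2 l b i j lam) r :=
    fun w hw => WJ_orbit_u2 hsym hge hij hK hlam hjJ' hw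
  have hclos_u : ∀ y ∈ closure (TJ l b ↑J), 0 ≤ bform l b y (uvec l b i j lam) := by
    intro y hy
    exact closure_minimal (fun t ht => TJ_bform_nonneg hsym horb_u t ht)
      (isClosed_le continuous_const (bform_continuous _)) hy
  have hclos_u2 : ∀ y ∈ closure (TJ l b ↑J), 0 ≤ bform l b y (uvec2 l b i j lam) := by
    intro y hy
    exact closure_minimal (fun t ht => TJ_bform_nonneg hsym horb_u2 t ht)
      (isClosed_le continuous_const (bform_continuous _)) hy
  -- key bilinear values
  have hbuu2 : bform l b (uvec l b i j lam) (uvec2 l b i j lam)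
      = -((b i j)^2 * (lam-1)^2) / 2 := by
    rw [uvec2, bform_add_right, bform_smul_right, bform_smul_right,
      tu_i hsym hij hK, tu_j hsym hij]
    linear_combination ((lam-1)/2) * hK
  have hbuu : bform l b (uvec l b i j lam) (uvec l b i j lam) = 0 := by
    nth_rewrite 2 [uvec]
    rw [bform_add_right, bform_smul_right, bform_smul_right,
      tu_i hsym hij hK, tu_j hsym hij]
    linear_combination ((lam-1)/2) * hK
  have htau : τ ≤ 0 := by
    have h0 := hclos_u2 vlam hvT
    rw [hvlam_u, bform_smul_left, hbuu2] at h0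
    have h6 : (0:ℝ) < b i j := by linarith
    have h7 : 0 < b i j ^ 2 * (lam - 1)^2 / 2 :=
      div_pos (mul_pos (pow_pos h6 2) (pow_pos hlm1pos 2)) (by norm_num)
    nlinarith [h0, h7]
  set ρ := -(c0 * τ) with hρdef
  have hρ0 : 0 ≤ ρ := by rw [hρdef]; nlinarith
  set κ := 2*lam/((lam-1)^2*(lam+1)) with hκdef
  have hκ0 : 0 < κ := by
    rw [hκdef]; apply div_pos (by linarith); nlinarith
  clear_value τ ρ κ
  set q := ∑ k ∈ (Finset.univ.erase i).erase j, a k • cvec l b k with hqdef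
  have hqe : ∀ m, bform l b q (Pi.single m 1)
      = ∑ k ∈ (Finset.univ.erase i).erase j, a k * (Pi.single m 1 : Fin l → ℝ) k := by
    intro m
    rw [hqdef, bform_sum_left]
    exact Finset.sum_congr rfl fun k _ => by
      rw [bform_smul_left, bform_cvec hsym hBinv]
  have hqD : q ∈ chamberD l b := by
    intro m
    rw [hqe m]
    refine Finset.sum_nonneg fun k _ => mul_nonneg (ha k) ?_
    rw [Pi.single_apply]
    split <;> norm_num
  have hmemers : ∀ k ∈ (Finset.univ.erase i).erase j, k ≠ i ∧ k ≠ j := by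
    intro k hk
    have h1 := Finset.mem_erase.mp hk
    have h2 := Finset.mem_erase.mp h1.2
    exact ⟨h2.1, h1.1⟩
  have hqi : bform l b q (Pi.single i 1) = 0 := by
    rw [hqe]
    refine Finset.sum_eq_zero fun k hk => ?_
    rw [Pi.single_eq_of_ne (hmemers k hk).1, mul_zero]
  have hqj : bform l b q (Pi.single j 1) = 0 := by
    rw [hqe]
    refine Finset.sum_eq_zero fun k hk => ?_
    rw [Pi.single_eq_of_ne (hmemers k hk).2, mul_zero]
  have hfq_i : reflM l b i *ᵥ q = q := by
    rw [reflM_mulVec hsym, hqi]; simp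
  have hfq_j : reflM l b j *ᵥ q = q := by
    rw [reflM_mulVec hsym, hqj]; simp
  set z := cvec l b i + κ • uvec l b i j lam + κ • uvec2 l b i j lam with hzdef
  have hzi : bform l b z (Pi.single i 1) = 0 := by
    rw [hzdef, bform_add_left, bform_add_left, bform_smul_left, bform_smul_left,
      bform_cvec hsym hBinv, tu_i hsym hij hK, tu2_i hsym hij hK hlam, Pi.single_eq_same,
      hκdef]
    field_simp
    ring
  have hzj : bform l b z (Pi.single j 1) = 0 := by
    rw [hzdef, bform_add_left, bform_add_left, bform_smul_left, bform_smul_left,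
      bform_cvec hsym hBinv, tu_j hsym hij, tu2_j hsym hij,
      Pi.single_eq_of_ne hij]
    ring
  have hfz_i : reflM l b i *ᵥ z = z := by
    rw [reflM_mulVec hsym, hzi]; simp
  have hfz_j : reflM l b j *ᵥ z = z := by
    rw [reflM_mulVec hsym, hzj]; simp
  -- the word (σ_j σ_i)^n
  have hiJ' : i ∈ (↑J : Set (Fin l)) := by simpa using hiJ
  have hwmem : (reflM l b j * reflM l b i) ∈ Submonoid.closure (reflM l b '' (↑J : Set (Fin l))) :=
    mul_mem (Submonoid.subset_closure ⟨j, hjJ', rfl⟩) (Submonoid.subset_closure ⟨i, hiJ', rfl⟩)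
  have hstep_u : (reflM l b j * reflM l b i) *ᵥ uvec l b i j lam = lam • uvec l b i j lam := by
    rw [← mulVec_mulVec, refl_i_u hsym hij hK, mulVec_smul, refl_j_u2 hsym hij hK]
  have hstep_u2 : (reflM l b j * reflM l b i) *ᵥ uvec2 l b i j lam
      = lam⁻¹ • uvec2 l b i j lam := by
    rw [← mulVec_mulVec, refl_i_u2 hsym hij hK hlam, mulVec_smul, refl_j_u hsym hij hK]
  have hstep_q : (reflM l b j * reflM l b i) *ᵥ q = q := by
    rw [← mulVec_mulVec, hfq_i, hfq_j]
  have hstep_z : (reflM l b j * reflM l b i) *ᵥ z = z := by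
    rw [← mulVec_mulVec, hfz_i, hfz_j]
  have hwn_u : ∀ n : ℕ, (reflM l b j * reflM l b i)^n *ᵥ uvec l b i j lam
      = (lam^n) • uvec l b i j lam := by
    intro n
    induction n with
    | zero => simp
    | succ n ihn =>
      rw [pow_succ, ← mulVec_mulVec, hstep_u, mulVec_smul, ihn, smul_smul, pow_succ]
      ring_nf
  have hwn_u2 : ∀ n : ℕ, (reflM l b j * reflM l b i)^n *ᵥ uvec2 l b i j lam
      = ((lam⁻¹)^n) • uvec2 l b i j lam := by
    intro n
    induction n with
    | zero => simp
    | succ n ihn =>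
      rw [pow_succ, ← mulVec_mulVec, hstep_u2, mulVec_smul, ihn, smul_smul, pow_succ]
      ring_nf
  have hwn_q : ∀ n : ℕ, (reflM l b j * reflM l b i)^n *ᵥ q = q := by
    intro n
    induction n with
    | zero => simp
    | succ n ihn => rw [pow_succ, ← mulVec_mulVec, hstep_q, ihn]
  have hwn_z : ∀ n : ℕ, (reflM l b j * reflM l b i)^n *ᵥ z = z := by
    intro n
    induction n with
    | zero => simp
    | succ n ihn => rw [pow_succ, ← mulVec_mulVec, hstep_z, ihn]
  -- the approximating sequence
  have hcvec_split : cvec l b i = (-κ) • uvec l b i j lam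
      + ((-κ) • uvec2 l b i j lam + z) := by
    rw [hzdef]; module
  have hseq_eq : ∀ n : ℕ,
      (reflM l b j * reflM l b i)^n *ᵥ (q + (ρ * κ⁻¹ * (lam⁻¹)^n) • cvec l b i)
      = q + ((-ρ) • uvec l b i j lam
        + ((-(ρ * ((lam⁻¹)^n * (lam⁻¹)^n))) • uvec2 l b i j lam
          + (ρ * κ⁻¹ * (lam⁻¹)^n) • z)) := by
    intro n
    rw [mulVec_add, mulVec_smul, hwn_q, hcvec_split, mulVec_add, mulVec_smul,
      mulVec_add, mulVec_smul, hwn_u, hwn_u2, hwn_z]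
    have hκne : κ ≠ 0 := ne_of_gt hκ0
    have hpow : (lam⁻¹)^n * lam^n = 1 := by
      rw [← mul_pow, inv_mul_cancel₀ hlamne, one_pow]
    have hln : lam ^ n ≠ 0 := pow_ne_zero n hlamne
    match_scalars <;> simp only [inv_pow, mul_one, one_mul] <;> (try ring) <;>
      field_simp <;> ring
    all_goals linear_combination (-ρ) * hpow
  have hxnD : ∀ n : ℕ, q + (ρ * κ⁻¹ * (lam⁻¹)^n) • cvec l b i ∈ chamberD l b := by
    intro n m
    rw [bform_add_left, bform_smul_left, bform_cvec hsym hBinv]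
    have h1 : (0:ℝ) ≤ ρ * κ⁻¹ * (lam⁻¹)^n := by positivity
    have h2 : (0:ℝ) ≤ (Pi.single m 1 : Fin l → ℝ) i := by
      rw [Pi.single_apply]; split <;> norm_num
    have := hqD m
    nlinarith
  have hseq_mem : ∀ n : ℕ,
      (reflM l b j * reflM l b i)^n *ᵥ (q + (ρ * κ⁻¹ * (lam⁻¹)^n) • cvec l b i)
      ∈ TJ l b ↑J := by
    intro n
    exact ⟨(reflM l b j * reflM l b i)^n, pow_mem hwmem n, _, hxnD n, rfl⟩
  -- convergence
  have hinv1 : lam⁻¹ < 1 := inv_lt_one_of_one_lt₀ hlam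
  have hinv0 : (0:ℝ) ≤ lam⁻¹ := by positivity
  have h1 : Filter.Tendsto (fun n : ℕ => (lam⁻¹)^n) Filter.atTop (nhds 0) :=
    tendsto_pow_atTop_nhds_zero_of_lt_one hinv0 hinv1
  have h2 : Filter.Tendsto (fun n : ℕ => -(ρ * ((lam⁻¹)^n * (lam⁻¹)^n)))
      Filter.atTop (nhds 0) := by
    have := ((h1.mul h1).const_mul ρ).neg
    simpa using this
  have h3 : Filter.Tendsto (fun n : ℕ => ρ * κ⁻¹ * (lam⁻¹)^n) Filter.atTop (nhds 0) := by
    have := h1.const_mul (ρ * κ⁻¹)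
    simpa using this
  have hT2 : Filter.Tendsto
      (fun n : ℕ => (-(ρ * ((lam⁻¹)^n * (lam⁻¹)^n))) • uvec2 l b i j lam)
      Filter.atTop (nhds 0) := by
    have := h2.smul_const (uvec2 l b i j lam)
    simpa using this
  have hT3 : Filter.Tendsto (fun n : ℕ => (ρ * κ⁻¹ * (lam⁻¹)^n) • z)
      Filter.atTop (nhds 0) := by
    have := h3.smul_const z
    simpa using this
  have hτu : c0 • vlam = (-ρ) • uvec l b i j lam := by
    rw [hvlam_u, smul_smul, hρdef, neg_neg]
  have hlimpt : q + ((-ρ) • uvec l b i j lam + ((0:Fin l → ℝ) + 0)) = c0 • vlam + q := by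
    rw [hτu]
    simp [add_comm]
  have htot : Filter.Tendsto
      (fun n : ℕ => (reflM l b j * reflM l b i)^n *ᵥ (q + (ρ * κ⁻¹ * (lam⁻¹)^n) • cvec l b i))
      Filter.atTop (nhds (c0 • vlam + q)) := by
    rw [show (fun n : ℕ => (reflM l b j * reflM l b i)^n *ᵥ
        (q + (ρ * κ⁻¹ * (lam⁻¹)^n) • cvec l b i))
      = fun n : ℕ => q + ((-ρ) • uvec l b i j lam
        + ((-(ρ * ((lam⁻¹)^n * (lam⁻¹)^n))) • uvec2 l b i j lam
          + (ρ * κ⁻¹ * (lam⁻¹)^n) • z)) from funext hseq_eq]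
    rw [← hlimpt]
    exact tendsto_const_nhds.add (tendsto_const_nhds.add (hT2.add hT3))
  have hp_clos : c0 • vlam + q ∈ closure (TJ l b ↑J) :=
    mem_closure_of_tendsto htot (Filter.Eventually.of_forall hseq_mem)
  -- p is not in the interior
  have hqu : bform l b q (uvec l b i j lam) = 0 := by
    rw [hqdef, bform_sum_left]
    refine Finset.sum_eq_zero fun k hk => ?_
    rw [bform_smul_left, bform_cvec hsym hBinv]
    have h0 : uvec l b i j lam k = 0 := by
      simp [uvec, Pi.single_eq_of_ne (hmemers k hk).1, Pi.single_eq_of_ne (hmemers k hk).2]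
    rw [h0, mul_zero]
  have hfp : bform l b (c0 • vlam + q) (uvec l b i j lam) = 0 := by
    rw [bform_add_left, bform_smul_left, hvlam_u, bform_smul_left, hbuu, hqu]
    ring
  have hfc : bform l b (cvec l b i) (uvec l b i j lam) = lam + 1 := by
    rw [bform_cvec hsym hBinv]
    simp [uvec, Pi.single_eq_same, Pi.single_eq_of_ne hij]
  have hnotint : c0 • vlam + q ∉ interior (closure (TJ l b ↑J)) := by
    intro hint
    have hmem : closure (TJ l b ↑J) ∈ nhds (c0 • vlam + q) :=
      mem_interior_iff_mem_nhds.mp hint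
    have hc : Continuous (fun ε : ℝ => (c0 • vlam + q) - ε • cvec l b i) :=
      continuous_const.sub (continuous_id.smul continuous_const)
    have hcont : Filter.Tendsto (fun ε : ℝ => (c0 • vlam + q) - ε • cvec l b i)
        (nhdsWithin 0 (Set.Ioi 0)) (nhds (c0 • vlam + q)) := by
      have h4 := hc.continuousAt (x := 0)
      rw [ContinuousAt] at h4
      simp only [zero_smul, sub_zero] at h4
      exact h4.mono_left nhdsWithin_le_nhds
    have hev := hcont.eventually_mem hmem
    have hev2 : ∀ᶠ ε in nhdsWithin (0:ℝ) (Set.Ioi 0), 0 < ε :=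
      eventually_mem_nhdsWithin
    obtain ⟨ε, hεmem, hεpos⟩ := (hev.and hev2).exists
    have h5 := hclos_u _ hεmem
    rw [bform_sub_left, hfp, bform_smul_left, hfc] at h5
    nlinarith
  exact ⟨by rw [closure_closure]; exact hp_clos, hnotint⟩
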